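/- (Skorokhod reflection, deterministic version) Let w : [0,∞) → ℝ be continuous with w(0) = 0. Define L(t) = max_{0≤s≤t} ((−w(s)) ⊔ 0) and X(t) = w(t) + L(t). Then: (i) X(t) ≥ 0 for all t; (ii) L is nondecreasing with L(0)=0; (iii) L increases only when X = 0, i.e. if X(t) > 0 then L is locally constant at t. -/

import Mathlib

open Set

/-- (Skorokhod reflection, deterministic version) Let w be continuous with w 0 = 0,
L(t) = max_{0≤s≤t} ((−w(s)) ⊔ 0) and X(t) = w(t) + L(t). Then X ≥ 0 on [0,∞),
L is nondecreasing on [0,∞) with L 0 = 0, and L increases only when X = 0: if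
X(t) > 0 then L is locally constant at t. -/
theorem skorokhod_reflection_explicit (w : ℝ → ℝ) (hw : Continuous w) (hw0 : w 0 = 0) :
    let L : ℝ → ℝ := fun t => sSup ((fun s => max (-w s) 0) '' Icc 0 t)
    let X : ℝ → ℝ := fun t => w t + L t
    (∀ t : ℝ, 0 ≤ t → 0 ≤ X t) ∧
    (MonotoneOn L (Ici 0) ∧ L 0 = 0) ∧
    (∀ t : ℝ, 0 ≤ t → 0 < X t →
      ∃ ε > 0, ∀ u : ℝ, 0 ≤ u → |u - t| < ε → L u = L t) := by
  intro L X
  set f : ℝ → ℝ := fun s => max (-w s) 0 with hf_def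
  have hf : Continuous f := hw.neg.max continuous_const
  have hbdd : ∀ t : ℝ, BddAbove (f '' Icc 0 t) := fun t =>
    (isCompact_Icc.image hf).bddAbove
  have hne : ∀ t : ℝ, 0 ≤ t → (f '' Icc 0 t).Nonempty := fun t ht =>
    ⟨f 0, mem_image_of_mem f ⟨le_refl 0, ht⟩⟩
  have hle : ∀ t : ℝ, ∀ s ∈ Icc (0:ℝ) t, f s ≤ L t := fun t s hs =>
    le_csSup (hbdd t) (mem_image_of_mem f hs)
  have hf0 : f 0 = 0 := by simp [hf_def, hw0]
  have hLnonneg : ∀ t : ℝ, 0 ≤ t → 0 ≤ L t := fun t ht => hf0 ▸ hle t 0 ⟨le_refl 0, ht⟩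
  have hmono : MonotoneOn L (Ici 0) := fun a ha b _ hab =>
    csSup_le_csSup (hbdd b) (hne a ha) (image_mono (f := f) (Icc_subset_Icc_right hab))
  refine ⟨?_, ⟨hmono, ?_⟩, ?_⟩
  · intro t ht
    have h1 : f t ≤ L t := hle t t ⟨ht, le_refl t⟩
    have h2 : -w t ≤ f t := le_max_left _ _
    have : -w t ≤ L t := h2.trans h1
    simp only [X]
    linarith
  · show sSup (f '' Icc 0 0) = 0
    rw [Icc_self, image_singleton, csSup_singleton, hf0]
  · intro t ht hXt
    -- X t > 0 means w t > -L t
    have hXt' : -L t < w t := by simp only [X] at hXt; linarith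
    -- continuity: choose ε with |s - t| < ε → |w s - w t| < X t
    obtain ⟨ε, hε, hδ⟩ := Metric.continuous_iff.mp hw t (X t) hXt
    refine ⟨ε, hε, ?_⟩
    have hwε : ∀ s : ℝ, |s - t| < ε → -L t < w s := by
      intro s hs
      have := hδ s (by rwa [Real.dist_eq])
      rw [Real.dist_eq, abs_lt] at this
      simp only [X] at this
      linarith [this.1]
    intro u hu hut
    rcases le_total u t with hut' | htu'
    · -- u ≤ t : use attained max on [0, t]
      refine le_antisymm (hmono hu ht hut') ?_
      obtain ⟨s, hs, hsmax⟩ := isCompact_Icc.exists_isMaxOn (nonempty_Icc.mpr ht)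
        hf.continuousOn
      have hLt : L t = f s := by
        refine le_antisymm (csSup_le (hne t ht) ?_) (hle t s hs)
        rintro x ⟨y, hy, rfl⟩
        exact hsmax hy
      by_cases hLt0 : L t = 0
      · rw [hLt0]; exact hLnonneg u hu
      · -- L t > 0; claim s ≤ u
        have hLpos : 0 < L t := lt_of_le_of_ne (hLnonneg t ht) (Ne.symm hLt0)
        have hsu : s ≤ u := by
          by_contra hsu
          push_neg at hsu
          -- then s ∈ (u, t], so |s - t| < ε
          have hsε : |s - t| < ε := by
            rw [abs_lt]
            constructor
            · have : |u - t| < ε := hut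
              rw [abs_lt] at this
              linarith [hsu, this.1]
            · linarith [hs.2, hε]
          have hws : -L t < w s := hwε s hsε
          have : f s < L t := by
            simp only [hf_def]
            exact max_lt (by linarith) hLpos
          rw [hLt] at this
          exact lt_irrefl _ this
        rw [hLt]
        exact hle u s ⟨hs.1, hsu⟩
    · -- t ≤ u
      refine le_antisymm ?_ (hmono ht hu htu')
      refine csSup_le (hne u hu) ?_
      rintro x ⟨y, hy, rfl⟩
      rcases le_total y t with hyt | hty
      · exact hle t y ⟨hy.1, hyt⟩
      · have hyε : |y - t| < ε := by
          rw [abs_lt]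
          have : |u - t| < ε := hut
          rw [abs_lt] at this
          constructor <;> [linarith; linarith [hy.2, this.2]]
        have hwy : -L t < w y := hwε y hyε
        simp only [hf_def]
        exact max_le (by linarith) (hLnonneg t ht)
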